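/- For any wheel graph W_n of order n ≥ 5, γ_tc(M(W_n)) = ⌈2n/3⌉. -/

import Mathlib

open SimpleGraph

/-- The middle graph `M(G)`: vertices are `V(G) ⊕ E(G)`; an edge-vertex is adjacent to
another edge-vertex iff the edges are distinct and share an endpoint, and a vertex is
adjacent to an edge iff it is incident to it. -/
def middleGraph {V : Type*} (G : SimpleGraph V) : SimpleGraph (V ⊕ G.edgeSet) where
  Adj x y :=
    match x, y with
    | Sum.inl _, Sum.inl _ => False
    | Sum.inl v, Sum.inr e => v ∈ (e : Sym2 V)
    | Sum.inr e, Sum.inl v => v ∈ (e : Sym2 V)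
    | Sum.inr e, Sum.inr f => e ≠ f ∧ ∃ v, v ∈ (e : Sym2 V) ∧ v ∈ (f : Sym2 V)
  symm := by
    refine ⟨?_⟩
    rintro (v|e) (w|f) h
    · exact h
    · exact h
    · exact h
    · exact ⟨h.1.symm, h.2.imp fun v hv => ⟨hv.2, hv.1⟩⟩
  loopless := by
    refine ⟨?_⟩
    rintro (v|e) h
    · exact h
    · exact h.1 rfl

/-- `D` is a total dominating set of `G`: every vertex has a neighbour in `D`. -/
def IsTotalDomSet {V : Type*} (G : SimpleGraph V) (D : Set V) : Prop :=
  ∀ v : V, ∃ u ∈ D, G.Adj v u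

/-- `D` is a total outer-connected dominating set of `G`: it is total dominating and
the subgraph induced on the complement of `D` is connected. -/
def IsTOCDomSet {V : Type*} (G : SimpleGraph V) (D : Set V) : Prop :=
  IsTotalDomSet G D ∧ (G.induce Dᶜ).Connected

/-- The total domination number `γₜ(G)`. -/
noncomputable def totalDomNum {V : Type*} (G : SimpleGraph V) : ℕ :=
  sInf {k | ∃ D : Set V, IsTotalDomSet G D ∧ D.ncard = k}

/-- The total outer-connected domination number `γ_tc(G)`. -/
noncomputable def tocDomNum {V : Type*} (G : SimpleGraph V) : ℕ :=
  sInf {k | ∃ D : Set V, IsTOCDomSet G D ∧ D.ncard = k}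

/-- The set of leaves (vertices of degree 1) of `G`. -/
def leafSet {V : Type*} (G : SimpleGraph V) : Set V :=
  {v | ∃ u, G.neighborSet v = {u}}

/-- The wheel graph with hub `none` and rim cycle on `Fin n`. -/
def wheelGraph (n : ℕ) : SimpleGraph (Option (Fin n)) where
  Adj x y :=
    match x, y with
    | none, none => False
    | none, some _ => True
    | some _, none => True
    | some i, some j => (SimpleGraph.cycleGraph n).Adj i j
  symm := by
    refine ⟨?_⟩
    rintro (_|i) (_|j) h
    · exact h
    · exact h
    · exact h
    · exact (SimpleGraph.cycleGraph n).adj_symm h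
  loopless := by
    refine ⟨?_⟩
    rintro (_|i) h
    · exact h
    · exact (SimpleGraph.cycleGraph n).loopless.irrefl i h

/-- The corona `G ∘ K₁`: to each vertex `a` of `G` (copy `Sum.inl a`) a pendant
vertex `Sum.inr a` is attached. -/
def corona {V : Type*} (G : SimpleGraph V) : SimpleGraph (V ⊕ V) where
  Adj x y :=
    match x, y with
    | Sum.inl a, Sum.inl b => G.Adj a b
    | Sum.inl a, Sum.inr b => a = b
    | Sum.inr a, Sum.inl b => a = b
    | Sum.inr _, Sum.inr _ => False
  symm := by
    refine ⟨?_⟩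
    rintro (a|a) (b|b) h
    · exact G.adj_symm h
    · exact h.symm
    · exact h.symm
    · exact h
  loopless := by
    refine ⟨?_⟩
    rintro (a|a) h
    · exact G.loopless.irrefl a h
    · exact h

/-- The 2-corona `G ∘ P₂`: to each vertex `a` of `G` (copy `Sum.inl a`) a path
`Sum.inl a — Sum.inr (Sum.inl a) — Sum.inr (Sum.inr a)` of length 2 is attached. -/
def corona2 {V : Type*} (G : SimpleGraph V) : SimpleGraph (V ⊕ V ⊕ V) where
  Adj x y :=
    match x, y with
    | Sum.inl a, Sum.inl b => G.Adj a b
    | Sum.inl a, Sum.inr (Sum.inl b) => a = b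
    | Sum.inr (Sum.inl a), Sum.inl b => a = b
    | Sum.inr (Sum.inl a), Sum.inr (Sum.inr b) => a = b
    | Sum.inr (Sum.inr a), Sum.inr (Sum.inl b) => a = b
    | _, _ => False
  symm := by
    refine ⟨?_⟩
    rintro (a|a|a) (b|b|b) h <;> first | exact G.symm h | exact h.symm | exact h
  loopless := by
    refine ⟨?_⟩
    rintro (a|a|a) h
    · exact G.loopless.irrefl a h
    · exact h
    · exact h

/-- The spider `S_{1,n,n}`: hub `none`, middle vertices `some (.inl i)`,
leaves `some (.inr i)`; the star `K_{1,n}` with every edge subdivided once. -/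
def spiderGraph (n : ℕ) : SimpleGraph (Option (Fin n ⊕ Fin n)) where
  Adj x y :=
    match x, y with
    | none, some (Sum.inl _) => True
    | some (Sum.inl _), none => True
    | some (Sum.inl i), some (Sum.inr j) => i = j
    | some (Sum.inr i), some (Sum.inl j) => i = j
    | _, _ => False
  symm := by
    refine ⟨?_⟩
    rintro (_|i|i) (_|j|j) h <;> first | exact h.symm | exact h
  loopless := by
    refine ⟨?_⟩
    rintro (_|i|i) h <;> exact h

/-- The friendship graph `Fₙ`: `n` triangles sharing the common vertex `none`. -/
def friendshipGraph (n : ℕ) : SimpleGraph (Option (Fin n × Fin 2)) where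
  Adj x y :=
    match x, y with
    | none, some _ => True
    | some _, none => True
    | some (i, a), some (j, b) => i = j ∧ a ≠ b
    | none, none => False
  symm := by
    refine ⟨?_⟩
    rintro (_|⟨i,a⟩) (_|⟨j,b⟩) h <;> first | exact ⟨h.1.symm, h.2.symm⟩ | exact h
  loopless := by
    refine ⟨?_⟩
    rintro (_|⟨i,a⟩) h
    · exact h
    · exact h.2 rfl

namespace Aux
open Fin.CommRing
variable {m : ℕ}

lemma val2 : ((2 : Fin (m+4))).val = 2 := by
  show ((1+1 : Fin (m+4))).val = 2
  rw [Fin.val_add_eq_ite]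
  simp [Fin.val_one]

lemma one_ne_zero' : (1 : Fin (m+4)) ≠ 0 := by
  simp [Fin.ext_iff]

lemma two_ne_zero' : (2 : Fin (m+4)) ≠ 0 := by
  intro h
  have := congrArg Fin.val h
  rw [val2, Fin.val_zero] at this
  omega

/-- spoke edge -/
def spokeE (k : Fin (m+4)) : (wheelGraph (m+4)).edgeSet :=
  ⟨s(none, some k), by rw [mem_edgeSet]; trivial⟩

lemma rim_adj (k : Fin (m+4)) : (wheelGraph (m+4)).Adj (some k) (some (k+1)) := by
  show (cycleGraph (m+2+2)).Adj k (k+1)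
  rw [cycleGraph_adj]
  right
  exact add_sub_cancel_left k 1

/-- rim edge -/
def rimE (k : Fin (m+4)) : (wheelGraph (m+4)).edgeSet :=
  ⟨s(some k, some (k+1)), by rw [mem_edgeSet]; exact rim_adj k⟩

lemma spokeE_inj {j k : Fin (m+4)} (h : spokeE j = spokeE k) : j = k := by
  have := congrArg Subtype.val h
  simp only [spokeE, Sym2.eq_iff] at this
  rcases this with ⟨-, h2⟩ | ⟨h1, -⟩
  · exact Option.some_injective _ h2
  · exact absurd h1 (by simp)

lemma rimE_inj {j k : Fin (m+4)} (h : rimE j = rimE k) : j = k := by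
  have := congrArg Subtype.val h
  simp only [rimE, Sym2.eq_iff] at this
  rcases this with ⟨h1, -⟩ | ⟨h1, h2⟩
  · exact Option.some_injective _ h1
  · -- j = k + 1 and j + 1 = k : contradiction
    have hj : j = k + 1 := Option.some_injective _ h1
    have hk : j + 1 = k := Option.some_injective _ h2
    have h3 : k + (2 : Fin (m+4)) = k + 0 := by
      show k + (1 + 1) = k + 0
      rw [add_zero, ← add_assoc]
      conv_rhs => rw [← hk, hj]
    exact absurd (add_left_cancel h3) two_ne_zero'

lemma spokeE_ne_rimE (j k : Fin (m+4)) : spokeE j ≠ rimE k := by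
  intro h
  have := congrArg Subtype.val h
  simp only [spokeE, rimE, Sym2.eq_iff] at this
  rcases this with ⟨h1, -⟩ | ⟨h1, -⟩ <;> exact Option.some_ne_none _ h1.symm

lemma edge_cases (e : (wheelGraph (m+4)).edgeSet) :
    (∃ k, e = spokeE k) ∨ (∃ k, e = rimE k) := by
  obtain ⟨e, he⟩ := e
  induction e using Sym2.inductionOn with
  | hf a b =>
    rw [mem_edgeSet] at he
    match a, b with
    | none, none => exact absurd he (by simp [wheelGraph])
    | none, some k => exact Or.inl ⟨k, rfl⟩
    | some k, none => exact Or.inl ⟨k, Subtype.ext (Sym2.eq_swap)⟩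
    | some a, some b =>
      right
      have : (cycleGraph (m+2+2)).Adj a b := he
      rw [cycleGraph_adj] at this
      rcases this with h | h
      · have ha : a = b + 1 := by rw [← h]; ring
        subst ha
        exact ⟨b, Subtype.ext Sym2.eq_swap⟩
      · have hb : b = a + 1 := by rw [← h]; ring
        subst hb
        exact ⟨a, rfl⟩

-- ### middle graph vertices


abbrev VV (m : ℕ) := Option (Fin (m+4)) ⊕ (wheelGraph (m+4)).edgeSet
abbrev MG (m : ℕ) : SimpleGraph (VV m) := middleGraph (wheelGraph (m+4))

def hubV : VV m := Sum.inl none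
def vtx (k : Fin (m+4)) : VV m := Sum.inl (some k)
def spkV (k : Fin (m+4)) : VV m := Sum.inr (spokeE k)
def rimV (k : Fin (m+4)) : VV m := Sum.inr (rimE k)

lemma succ_ne_self (k : Fin (m+4)) : k + 1 ≠ k := by
  intro h
  have h2 : k + 1 = k + 0 := by rw [add_zero]; exact h
  exact one_ne_zero' (add_left_cancel h2)

-- basic adjacencies
lemma adj_hub_spk (k : Fin (m+4)) : (MG m).Adj hubV (spkV k) := by
  show none ∈ s(none, some k)
  simp

lemma adj_vtx_spk (k : Fin (m+4)) : (MG m).Adj (vtx k) (spkV k) := by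
  show some k ∈ s(none, some k)
  simp

lemma adj_vtx_rim (k : Fin (m+4)) : (MG m).Adj (vtx k) (rimV k) := by
  show some k ∈ s(some k, some (k+1))
  simp

lemma adj_vtx_rim' {j k : Fin (m+4)} (h : j + 1 = k) : (MG m).Adj (vtx k) (rimV j) := by
  show some k ∈ s(some j, some (j+1))
  rw [h]
  simp

lemma adj_spk_spk {j k : Fin (m+4)} (h : j ≠ k) : (MG m).Adj (spkV j) (spkV k) := by
  refine ⟨fun he => h (spokeE_inj (Subtype.ext (congrArg Subtype.val he))), none, ?_, ?_⟩ <;> simp [spokeE]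

lemma adj_spk_rim (j k : Fin (m+4)) (h : j = k ∨ j = k + 1) : (MG m).Adj (spkV j) (rimV k) := by
  refine ⟨fun he => spokeE_ne_rimE j k (Subtype.ext (congrArg Subtype.val he)), some j, ?_, ?_⟩
  · simp [spokeE]
  · show some j ∈ s(some k, some (k+1))
    rcases h with rfl | rfl <;> simp

lemma adj_rim_rim_succ (k : Fin (m+4)) : (MG m).Adj (rimV k) (rimV (k+1)) := by
  refine ⟨fun he => succ_ne_self k (rimE_inj (Subtype.ext (congrArg Subtype.val he))).symm,
    some (k+1), ?_, ?_⟩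
  · show some (k+1) ∈ s(some k, some (k+1)); simp
  · show some (k+1) ∈ s(some (k+1), some (k+1+1)); simp

-- classification of neighbours
lemma adj_hub_classify {w : VV m} (h : (MG m).Adj hubV w) : ∃ k, w = spkV k := by
  match w with
  | Sum.inl v => exact absurd h (by cases v <;> simp [middleGraph, hubV, MG])
  | Sum.inr e =>
    rcases edge_cases e with ⟨k, rfl⟩ | ⟨k, rfl⟩
    · exact ⟨k, rfl⟩
    · exfalso
      have h' : (none : Option (Fin (m+4))) ∈ s(some k, some (k+1)) := h
      simp at h'

lemma adj_vtx_classify {k : Fin (m+4)} {w : VV m} (h : (MG m).Adj (vtx k) w) :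
    w = spkV k ∨ w = rimV k ∨ ∃ j, j + 1 = k ∧ w = rimV j := by
  match w with
  | Sum.inl v => exact absurd h (by cases v <;> simp [middleGraph, vtx, MG])
  | Sum.inr e =>
    rcases edge_cases e with ⟨j, rfl⟩ | ⟨j, rfl⟩
    · have h' : some k ∈ s((none : Option (Fin (m+4))), some j) := h
      simp at h'
      subst h'
      exact Or.inl rfl
    · have h' : some k ∈ s(some j, some (j+1)) := h
      simp at h'
      rcases h' with rfl | rfl
      · exact Or.inr (Or.inl rfl)
      · exact Or.inr (Or.inr ⟨j, rfl, rfl⟩)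

lemma adj_spk_classify {k : Fin (m+4)} {w : VV m} (h : (MG m).Adj (spkV k) w) :
    w = hubV ∨ w = vtx k ∨ (∃ j, j ≠ k ∧ w = spkV j) ∨ w = rimV k ∨
      (∃ j, j + 1 = k ∧ w = rimV j) := by
  match w with
  | Sum.inl none => exact Or.inl rfl
  | Sum.inl (some v) =>
    have h' : some v ∈ s((none : Option (Fin (m+4))), some k) := h
    simp at h'
    subst h'
    exact Or.inr (Or.inl rfl)
  | Sum.inr e =>
    rcases edge_cases e with ⟨j, rfl⟩ | ⟨j, rfl⟩
    · refine Or.inr (Or.inr (Or.inl ⟨j, fun hjk => ?_, rfl⟩))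
      exact h.1 (by rw [hjk])
    · obtain ⟨-, v, hv1, hv2⟩ := h
      have hv1' : v ∈ s((none : Option (Fin (m+4))), some k) := hv1
      have hv2' : v ∈ s(some j, some (j+1)) := hv2
      simp at hv1' hv2'
      rcases hv1' with rfl | rfl
      · simp at hv2'
      · rcases hv2' with h2 | h2
        · rw [Option.some_injective _ h2.symm]
          exact Or.inr (Or.inr (Or.inr (Or.inl rfl)))
        · exact Or.inr (Or.inr (Or.inr (Or.inr ⟨j, Option.some_injective _ h2.symm, rfl⟩)))

lemma adj_rim_classify {k : Fin (m+4)} {w : VV m} (h : (MG m).Adj (rimV k) w) :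
    w = vtx k ∨ w = vtx (k+1) ∨ w = spkV k ∨ w = spkV (k+1) ∨ w = rimV (k+1) ∨
      (∃ j, j + 1 = k ∧ w = rimV j) := by
  match w with
  | Sum.inl none =>
    exfalso
    have h' : (none : Option (Fin (m+4))) ∈ s(some k, some (k+1)) := h
    simp at h'
  | Sum.inl (some v) =>
    have h' : some v ∈ s(some k, some (k+1)) := h
    simp at h'
    rcases h' with rfl | rfl
    · exact Or.inl rfl
    · exact Or.inr (Or.inl rfl)
  | Sum.inr e =>
    rcases edge_cases e with ⟨j, rfl⟩ | ⟨j, rfl⟩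
    · obtain ⟨-, v, hv1, hv2⟩ := h
      have hv1' : v ∈ s(some k, some (k+1)) := hv1
      have hv2' : v ∈ s((none : Option (Fin (m+4))), some j) := hv2
      simp at hv1' hv2'
      rcases hv1' with rfl | rfl
      · rcases hv2' with h2 | h2
        · simp at h2
        · rw [← Option.some_injective _ h2]
          exact Or.inr (Or.inr (Or.inl rfl))
      · rcases hv2' with h2 | h2
        · simp at h2
        · rw [← Option.some_injective _ h2]
          exact Or.inr (Or.inr (Or.inr (Or.inl rfl)))
    · obtain ⟨hne, v, hv1, hv2⟩ := h
      have hjk : j ≠ k := fun hh => hne (by rw [hh])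
      have hv1' : v ∈ s(some k, some (k+1)) := hv1
      have hv2' : v ∈ s(some j, some (j+1)) := hv2
      simp at hv1' hv2'
      rcases hv1' with rfl | rfl <;> rcases hv2' with h2 | h2
      · exact absurd (Option.some_injective _ h2).symm hjk
      · exact Or.inr (Or.inr (Or.inr (Or.inr (Or.inr ⟨j, Option.some_injective _ h2.symm, rfl⟩))))
      · have : j = k + 1 := (Option.some_injective _ h2).symm
        subst this
        exact Or.inr (Or.inr (Or.inr (Or.inr (Or.inl rfl))))
      · exact absurd (add_right_cancel ((Option.some_injective _ h2) : k + 1 = j + 1)).symm hjk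

-- injectivity across vertex kinds
lemma spkV_inj {j k : Fin (m+4)} (h : (spkV j : VV m) = spkV k) : j = k :=
  spokeE_inj (Sum.inr_injective h)

lemma rimV_inj {j k : Fin (m+4)} (h : (rimV j : VV m) = rimV k) : j = k :=
  rimE_inj (Sum.inr_injective h)

lemma spkV_ne_rimV (j k : Fin (m+4)) : (spkV j : VV m) ≠ rimV k :=
  fun h => spokeE_ne_rimE j k (Sum.inr_injective h)


-- ### indicators and counting


section LB

open Classical in
noncomputable def xI (D : Set (VV m)) (k : Fin (m+4)) : ℕ := if rimV k ∈ D then 1 else 0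
open Classical in
noncomputable def sI (D : Set (VV m)) (k : Fin (m+4)) : ℕ := if spkV k ∈ D then 1 else 0
open Classical in
noncomputable def uI (D : Set (VV m)) (k : Fin (m+4)) : ℕ := if vtx k ∈ D then 1 else 0
open Classical in
noncomputable def hI (D : Set (VV m)) : ℕ := if hubV ∈ D then 1 else 0

variable {D : Set (VV m)}

lemma xI_le (k : Fin (m+4)) : xI D k ≤ 1 := by unfold xI; split <;> simp
lemma sI_le (k : Fin (m+4)) : sI D k ≤ 1 := by unfold sI; split <;> simp
lemma uI_le (k : Fin (m+4)) : uI D k ≤ 1 := by unfold uI; split <;> simp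

lemma xI_eq_one {k : Fin (m+4)} (h : rimV k ∈ D) : xI D k = 1 := by unfold xI; exact if_pos h
lemma sI_eq_one {k : Fin (m+4)} (h : spkV k ∈ D) : sI D k = 1 := by unfold sI; exact if_pos h
lemma uI_eq_one {k : Fin (m+4)} (h : vtx k ∈ D) : uI D k = 1 := by unfold uI; exact if_pos h
lemma hI_eq_one (h : (hubV : VV m) ∈ D) : hI D = 1 := by unfold hI; exact if_pos h

lemma vtx_injective : Function.Injective (vtx (m := m)) :=
  fun a b h => Option.some_injective _ (Sum.inl_injective h)

lemma count_le (D : Set (VV m)) :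
    (∑ k, uI D k) + (∑ k, xI D k) + (∑ k, sI D k) + hI D ≤ D.ncard := by
  classical
  have hfin : D.Finite := Set.toFinite D
  set F := hfin.toFinset with hF
  have hcard : D.ncard = F.card := by
    rw [hF, Set.ncard_eq_toFinset_card D hfin]
  set B1 := (Finset.univ.filter fun k => vtx (m := m) k ∈ D).image (vtx (m := m)) with hB1
  set B2 := (Finset.univ.filter fun k => rimV (m := m) k ∈ D).image (rimV (m := m)) with hB2
  set B3 := (Finset.univ.filter fun k => spkV (m := m) k ∈ D).image (spkV (m := m)) with hB3
  set B4 : Finset (VV m) := if hubV ∈ D then {hubV} else ∅ with hB4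
  have hc1 : ∑ k, uI D k = B1.card := by
    rw [hB1, Finset.card_image_of_injective _ vtx_injective, Finset.card_filter]
    unfold uI
    simp
  have hc2 : ∑ k, xI D k = B2.card := by
    rw [hB2, Finset.card_image_of_injective _ (fun a b h => rimV_inj h), Finset.card_filter]
    unfold xI
    simp
  have hc3 : ∑ k, sI D k = B3.card := by
    rw [hB3, Finset.card_image_of_injective _ (fun a b h => spkV_inj h), Finset.card_filter]
    unfold sI
    simp
  have hc4 : hI D = B4.card := by
    unfold hI
    rw [hB4]
    split <;> simp
  have hd12 : Disjoint B1 B2 := by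
    rw [Finset.disjoint_left]
    rintro a ha hb
    simp only [hB1, hB2, Finset.mem_image] at ha hb
    obtain ⟨k, -, rfl⟩ := ha
    obtain ⟨k', -, h⟩ := hb
    exact Sum.inr_ne_inl h
  have hd13 : Disjoint B1 B3 := by
    rw [Finset.disjoint_left]
    rintro a ha hb
    simp only [hB1, hB3, Finset.mem_image] at ha hb
    obtain ⟨k, -, rfl⟩ := ha
    obtain ⟨k', -, h⟩ := hb
    exact Sum.inr_ne_inl h
  have hd23 : Disjoint B2 B3 := by
    rw [Finset.disjoint_left]
    rintro a ha hb
    simp only [hB2, hB3, Finset.mem_image] at ha hb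
    obtain ⟨k, -, rfl⟩ := ha
    obtain ⟨k', -, h⟩ := hb
    exact spkV_ne_rimV k' k h
  have hd4 : Disjoint (B1 ∪ B2 ∪ B3) B4 := by
    rw [Finset.disjoint_left]
    rintro a ha hb
    have hb' : a = hubV := by
      rw [hB4] at hb
      split at hb
      · simpa using hb
      · simp at hb
    subst hb'
    simp only [Finset.mem_union, hB1, hB2, hB3, Finset.mem_image] at ha
    rcases ha with (⟨k, -, h⟩ | ⟨k, -, h⟩) | ⟨k, -, h⟩
    · exact Option.some_ne_none _ (Sum.inl_injective (h : (Sum.inl (some k) : VV m) = Sum.inl none))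
    · exact Sum.inr_ne_inl h
    · exact Sum.inr_ne_inl h
  have hsub : B1 ∪ B2 ∪ B3 ∪ B4 ⊆ F := by
    intro a ha
    rw [hF, Set.Finite.mem_toFinset]
    simp only [Finset.mem_union, hB1, hB2, hB3, Finset.mem_image, Finset.mem_filter] at ha
    rcases ha with ((⟨k, hk, rfl⟩ | ⟨k, hk, rfl⟩) | ⟨k, hk, rfl⟩) | h4
    · exact hk.2
    · exact hk.2
    · exact hk.2
    · rw [hB4] at h4
      split at h4
      · rename_i hh
        rw [Finset.mem_singleton] at h4
        subst h4
        exact hh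
      · simp at h4
  calc (∑ k, uI D k) + (∑ k, xI D k) + (∑ k, sI D k) + hI D
      = B1.card + B2.card + B3.card + B4.card := by rw [hc1, hc2, hc3, hc4]
    _ = (B1 ∪ B2 ∪ B3 ∪ B4).card := by
        rw [Finset.card_union_of_disjoint hd4, Finset.card_union_of_disjoint
          (Finset.disjoint_union_left.2 ⟨hd13, hd23⟩), Finset.card_union_of_disjoint hd12]
    _ ≤ F.card := Finset.card_le_card hsub
    _ = D.ncard := hcard.symm

lemma sum_shift (f : Fin (m+4) → ℕ) (c : Fin (m+4)) : ∑ i, f (i + c) = ∑ i, f i :=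
  Fintype.sum_equiv (Equiv.addRight c) _ _ (fun i => rfl)

-- domination facts
variable (hD : IsTotalDomSet (MG m) D)
include hD

lemma fact_hub : 1 ≤ ∑ k, sI D k := by
  obtain ⟨w, hw, hadj⟩ := hD hubV
  obtain ⟨k, rfl⟩ := adj_hub_classify hadj
  calc 1 = sI D k := (sI_eq_one hw).symm
    _ ≤ ∑ k, sI D k := Finset.single_le_sum (fun i _ => Nat.zero_le _) (Finset.mem_univ k)

lemma fact_vtx (k : Fin (m+4)) : 1 ≤ sI D k + xI D (k - 1) + xI D k := by
  obtain ⟨w, hw, hadj⟩ := hD (vtx k)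
  rcases adj_vtx_classify hadj with rfl | rfl | ⟨j, hj, rfl⟩
  · have := sI_eq_one hw; omega
  · have := xI_eq_one hw; omega
  · obtain rfl : j = k - 1 := eq_sub_of_add_eq hj
    have := xI_eq_one hw; omega

lemma fact_rim (k : Fin (m+4)) :
    1 ≤ uI D k + uI D (k+1) + sI D k + sI D (k+1) + xI D (k-1) + xI D (k+1) := by
  obtain ⟨w, hw, hadj⟩ := hD (rimV k)
  rcases adj_rim_classify hadj with rfl | rfl | rfl | rfl | rfl | ⟨j, hj, rfl⟩
  · have := uI_eq_one hw; omega
  · have := uI_eq_one hw; omega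
  · have := sI_eq_one hw; omega
  · have := sI_eq_one hw; omega
  · have := xI_eq_one hw; omega
  · obtain rfl : j = k - 1 := eq_sub_of_add_eq hj
    have := xI_eq_one hw; omega

lemma fact_spk {j : Fin (m+4)} (hj : spkV j ∈ D) (hH : hubV ∉ D)
    (hU : ∀ k, vtx (m := m) k ∉ D) (hS : ∀ k, k ≠ j → spkV (m := m) k ∉ D) :
    rimV (m := m) j ∈ D ∨ rimV (m := m) (j - 1) ∈ D := by
  obtain ⟨w, hw, hadj⟩ := hD (spkV j)
  rcases adj_spk_classify hadj with rfl | rfl | ⟨k, hk, rfl⟩ | rfl | ⟨k, hk, rfl⟩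
  · exact absurd hw hH
  · exact absurd hw (hU j)
  · exact absurd hw (hS k hk)
  · exact Or.inl hw
  · obtain rfl : k = j - 1 := eq_sub_of_add_eq hk
    exact Or.inr hw

-- window
lemma window (i : Fin (m+4)) :
    2 ≤ xI D i + xI D (i+1) + xI D (i+2) + sI D (i+1) + sI D (i+2) + uI D (i+1) + uI D (i+2) := by
  have h3 := fact_rim hD (i+1)
  rw [show i + 1 - 1 = i from by ring, show i + 1 + 1 = i + 2 from by ring] at h3
  have h1 := fact_vtx hD (i+1)
  rw [show i + 1 - 1 = i from by ring] at h1
  have h2 := fact_vtx hD (i+2)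
  rw [show i + 2 - 1 = i + 1 from by ring] at h2
  have := xI_le (D := D) (i+1)
  omega

omit hD in
lemma sum_window :
    ∑ i : Fin (m+4), (xI D i + xI D (i+1) + xI D (i+2) + sI D (i+1) + sI D (i+2)
      + uI D (i+1) + uI D (i+2)) =
    3 * (∑ k, xI D k) + 2 * (∑ k, sI D k) + 2 * (∑ k, uI D k) := by
  simp only [Finset.sum_add_distrib]
  rw [sum_shift (xI D) 1, sum_shift (xI D) 2, sum_shift (sI D) 1, sum_shift (sI D) 2,
    sum_shift (uI D) 1, sum_shift (uI D) 2]
  ring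

lemma lower_bound : 2 * (m + 4) + 2 ≤ 3 * D.ncard := by
  have hcount := count_le D
  have hwin : ∀ i : Fin (m+4), 2 ≤ xI D i + xI D (i+1) + xI D (i+2) + sI D (i+1) + sI D (i+2)
      + uI D (i+1) + uI D (i+2) := fun i => window hD i
  have hsum : 2 * (m+4) ≤ 3 * (∑ k, xI D k) + 2 * (∑ k, sI D k) + 2 * (∑ k, uI D k) := by
    rw [← sum_window]
    calc 2 * (m+4) = ∑ _i : Fin (m+4), 2 := by simp [mul_comm]
      _ ≤ _ := Finset.sum_le_sum (fun i _ => hwin i)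
  have hS1 := fact_hub hD
  by_cases hres : 2 ≤ (∑ k, sI D k) + (∑ k, uI D k) + 3 * hI D
  · omega
  -- residual case
  have hSs : ∑ k, sI D k = 1 := by omega
  have hSu : ∑ k, uI D k = 0 := by omega
  have hH : hI D = 0 := by omega
  have hHc : (hubV : VV m) ∉ D := by
    intro h
    rw [hI_eq_one h] at hH
    omega
  have hUc : ∀ k, vtx (m := m) k ∉ D := by
    intro k hk
    have : uI D k = 0 := by
      have := Finset.sum_eq_zero_iff.1 hSu k (Finset.mem_univ k)
      exact this
    rw [uI_eq_one hk] at this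
    omega
  -- get the unique spoke
  obtain ⟨w, hw, hadj⟩ := hD hubV
  obtain ⟨j, rfl⟩ := adj_hub_classify hadj
  have hSc : ∀ k, k ≠ j → spkV (m := m) k ∉ D := by
    intro k hk hkD
    have h1 : sI D k = 1 := sI_eq_one hkD
    have h2 : sI D j = 1 := sI_eq_one hw
    have : (2 : ℕ) ≤ ∑ k, sI D k := by
      have hle : ({k, j} : Finset (Fin (m+4))).sum (sI D) ≤ ∑ k, sI D k :=
        Finset.sum_le_sum_of_subset (Finset.subset_univ _)
      rw [Finset.sum_pair hk] at hle
      omega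
    omega
  -- the spoke is dominated by a rim edge
  have hspoke := fact_spk hD hw hHc hUc hSc
  -- find a window of weight ≥ 3
  have hbig : ∃ i0 : Fin (m+4), 3 ≤ xI D i0 + xI D (i0+1) + xI D (i0+2) + sI D (i0+1)
      + sI D (i0+2) + uI D (i0+1) + uI D (i0+2) := by
    have hsj : sI D j = 1 := sI_eq_one hw
    rcases hspoke with hx | hx
    · refine ⟨j - 2, ?_⟩
      rw [show j - 2 + 1 = j - 1 from by ring, show j - 2 + 2 = j from by ring]
      have h1 := fact_vtx hD (j - 1)
      rw [show j - 1 - 1 = j - 2 from by ring] at h1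
      have := xI_eq_one hx
      omega
    · refine ⟨j - 1, ?_⟩
      rw [show j - 1 + 1 = j from by ring, show j - 1 + 2 = j + 1 from by ring]
      have h1 := fact_vtx hD (j + 1)
      rw [show j + 1 - 1 = j from by ring] at h1
      have := xI_eq_one hx
      omega
  obtain ⟨i0, hi0⟩ := hbig
  have herase : 2 * (m + 3) ≤ ∑ i ∈ Finset.univ.erase i0, (xI D i + xI D (i+1) + xI D (i+2)
      + sI D (i+1) + sI D (i+2) + uI D (i+1) + uI D (i+2)) := by
    calc 2 * (m+3) = ∑ _i ∈ Finset.univ.erase i0, 2 := by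
          rw [Finset.sum_const, Finset.card_erase_of_mem (Finset.mem_univ i0)]
          simp [mul_comm]
    _ ≤ _ := Finset.sum_le_sum (fun i _ => hwin i)
  have hsum2 : 2 * (m+4) + 1 ≤ 3 * (∑ k, xI D k) + 2 * (∑ k, sI D k) + 2 * (∑ k, uI D k) := by
    rw [← sum_window (D := D)]
    calc 2 * (m+4) + 1 = 3 + 2 * (m+3) := by ring
      _ ≤ (xI D i0 + xI D (i0+1) + xI D (i0+2) + sI D (i0+1) + sI D (i0+2) + uI D (i0+1)
            + uI D (i0+2)) + ∑ i ∈ Finset.univ.erase i0, (xI D i + xI D (i+1) + xI D (i+2)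
            + sI D (i+1) + sI D (i+2) + uI D (i+1) + uI D (i+2)) := Nat.add_le_add hi0 herase
      _ = ∑ i : Fin (m+4), (xI D i + xI D (i+1) + xI D (i+2) + sI D (i+1) + sI D (i+2)
            + uI D (i+1) + uI D (i+2)) :=
          Finset.add_sum_erase Finset.univ (fun i => xI D i + xI D (i+1) + xI D (i+2)
            + sI D (i+1) + sI D (i+2) + uI D (i+1) + uI D (i+2)) (Finset.mem_univ i0)
  omega

end LB


-- ### upper bound


section UB

variable (j0 : Fin (m+4)) (R : Finset (Fin (m+4)))

def DubF : Finset (VV m) := insert (spkV j0) (R.image (rimV (m := m)))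

lemma mem_DubF {w : VV m} :
    w ∈ DubF j0 R ↔ w = spkV j0 ∨ ∃ k ∈ R, w = rimV k := by
  simp only [DubF, Finset.mem_insert, Finset.mem_image]
  constructor
  · rintro (rfl | ⟨k, hk, rfl⟩)
    · exact Or.inl rfl
    · exact Or.inr ⟨k, hk, rfl⟩
  · rintro (rfl | ⟨k, hk, rfl⟩)
    · exact Or.inl rfl
    · exact Or.inr ⟨k, hk, rfl⟩

lemma card_DubF : (DubF j0 R).card = R.card + 1 := by
  rw [DubF, Finset.card_insert_of_notMem, Finset.card_image_of_injective _
    (fun a b h => rimV_inj h)]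
  intro h
  rw [Finset.mem_image] at h
  obtain ⟨k, -, hk⟩ := h
  exact spkV_ne_rimV j0 k hk.symm

lemma hub_not_mem : (hubV : VV m) ∉ (DubF j0 R : Set (VV m)) := by
  intro h
  rw [Finset.mem_coe, mem_DubF] at h
  rcases h with h | ⟨k, -, h⟩ <;> exact Sum.inl_ne_inr h

lemma vtx_not_mem (k : Fin (m+4)) : (vtx k : VV m) ∉ (DubF j0 R : Set (VV m)) := by
  intro h
  rw [Finset.mem_coe, mem_DubF] at h
  rcases h with h | ⟨k', -, h⟩ <;> exact Sum.inl_ne_inr h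

lemma spk_not_mem {k : Fin (m+4)} (hk : k ≠ j0) :
    (spkV k : VV m) ∉ (DubF j0 R : Set (VV m)) := by
  intro h
  rw [Finset.mem_coe, mem_DubF] at h
  rcases h with h | ⟨k', -, h⟩
  · exact hk (spkV_inj h)
  · exact spkV_ne_rimV k k' h

lemma rim_not_mem {k : Fin (m+4)} (hk : k ∉ R) :
    (rimV k : VV m) ∉ (DubF j0 R : Set (VV m)) := by
  intro h
  rw [Finset.mem_coe, mem_DubF] at h
  rcases h with h | ⟨k', hk', h⟩
  · exact spkV_ne_rimV j0 k h.symm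
  · rw [rimV_inj h] at hk
    exact hk hk'

lemma spk_mem : (spkV j0 : VV m) ∈ (DubF j0 R : Set (VV m)) := by
  rw [Finset.mem_coe, mem_DubF]; exact Or.inl rfl

lemma rim_mem {k : Fin (m+4)} (hk : k ∈ R) : (rimV k : VV m) ∈ (DubF j0 R : Set (VV m)) := by
  rw [Finset.mem_coe, mem_DubF]; exact Or.inr ⟨k, hk, rfl⟩

lemma ub_dom
    (h1 : ∀ k : Fin (m+4), k ∈ R ∨ (∃ j ∈ R, j + 1 = k) ∨ k = j0)
    (h2 : ∀ k : Fin (m+4), k + 1 ∈ R ∨ (∃ j ∈ R, j + 1 = k) ∨ k = j0 ∨ k + 1 = j0)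
    (h3 : j0 ∈ R ∨ ∃ j ∈ R, j + 1 = j0) :
    IsTotalDomSet (MG m) (DubF j0 R : Set (VV m)) := by
  intro v
  match v with
  | Sum.inl none => exact ⟨spkV j0, spk_mem j0 R, adj_hub_spk j0⟩
  | Sum.inl (some k) =>
    rcases h1 k with hk | ⟨j, hj, hjk⟩ | rfl
    · exact ⟨rimV k, rim_mem j0 R hk, adj_vtx_rim k⟩
    · exact ⟨rimV j, rim_mem j0 R hj, adj_vtx_rim' hjk⟩
    · exact ⟨spkV k, spk_mem k R, adj_vtx_spk k⟩
  | Sum.inr e =>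
    rcases edge_cases e with ⟨k, rfl⟩ | ⟨k, rfl⟩
    · by_cases hk : k = j0
      · subst hk
        rcases h3 with hk | ⟨j, hj, hjk⟩
        · exact ⟨rimV k, rim_mem k R hk, adj_spk_rim k k (Or.inl rfl)⟩
        · exact ⟨rimV j, rim_mem k R hj, adj_spk_rim k j (Or.inr hjk.symm)⟩
      · exact ⟨spkV j0, spk_mem j0 R, adj_spk_spk hk⟩
    · rcases h2 k with hk | ⟨j, hj, hjk⟩ | rfl | hk
      · exact ⟨rimV (k+1), rim_mem j0 R hk, adj_rim_rim_succ k⟩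
      · refine ⟨rimV j, rim_mem j0 R hj, ?_⟩
        have := (adj_rim_rim_succ j).symm
        rw [hjk] at this
        exact this
      · exact ⟨spkV k, spk_mem k R, (adj_spk_rim k k (Or.inl rfl)).symm⟩
      · exact ⟨spkV j0, spk_mem j0 R, (adj_spk_rim j0 k (Or.inr hk.symm)).symm⟩

lemma ind_adj {s : Set (VV m)} {a b : VV m} (ha : a ∈ s) (hb : b ∈ s)
    (h : (MG m).Adj a b) : ((MG m).induce s).Adj ⟨a, ha⟩ ⟨b, hb⟩ := by
  simp [h]

lemma sub_one_ne_self (k : Fin (m+4)) : k - 1 ≠ k := by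
  intro h
  have h2 : k - 1 + 1 = k + 1 := by rw [h]
  rw [sub_add_cancel] at h2
  exact succ_ne_self k h2.symm

lemma ub_conn (h4 : ∀ j ∈ R, j + 1 ≠ j0) :
    ((MG m).induce ((DubF j0 R : Set (VV m)))ᶜ).Connected := by
  rw [connected_iff]
  have hhub : (hubV : VV m) ∈ ((DubF j0 R : Set (VV m)))ᶜ := hub_not_mem j0 R
  refine ⟨?_, ⟨⟨hubV, hhub⟩⟩⟩
  have key : ∀ a : ↥(((DubF j0 R : Set (VV m)))ᶜ),
      ((MG m).induce ((DubF j0 R : Set (VV m)))ᶜ).Reachable a ⟨hubV, hhub⟩ := by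
    rintro ⟨a, ha⟩
    match a with
    | Sum.inl none => exact Reachable.refl _
    | Sum.inl (some k) =>
      by_cases hk : k = j0
      · subst hk
        have hrim : (rimV (k - 1) : VV m) ∈ ((DubF k R : Set (VV m)))ᶜ := by
          apply rim_not_mem
          intro hmem
          exact h4 _ hmem (by rw [sub_add_cancel])
        have hspk : (spkV (k - 1) : VV m) ∈ ((DubF k R : Set (VV m)))ᶜ :=
          spk_not_mem k R (sub_one_ne_self k)
        refine ((ind_adj ha hrim (adj_vtx_rim' (by rw [sub_add_cancel]))).reachable).trans
          (((ind_adj hrim hspk ((adj_spk_rim (k-1) (k-1) (Or.inl rfl)).symm)).reachable).trans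
            ((ind_adj hspk hhub ((adj_hub_spk (k-1)).symm)).reachable))
      · have hspk : (spkV k : VV m) ∈ ((DubF j0 R : Set (VV m)))ᶜ := spk_not_mem j0 R hk
        exact ((ind_adj ha hspk (adj_vtx_spk k)).reachable).trans
          ((ind_adj hspk hhub ((adj_hub_spk k).symm)).reachable)
    | Sum.inr e =>
      rcases edge_cases e with ⟨k, rfl⟩ | ⟨k, rfl⟩
      · exact (ind_adj ha hhub ((adj_hub_spk k).symm)).reachable
      · by_cases hk : k = j0
        · subst hk
          have hspk : (spkV (k+1) : VV m) ∈ ((DubF k R : Set (VV m)))ᶜ :=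
            spk_not_mem k R (succ_ne_self k)
          exact ((ind_adj ha hspk ((adj_spk_rim (k+1) k (Or.inr rfl)).symm)).reachable).trans
            ((ind_adj hspk hhub ((adj_hub_spk (k+1)).symm)).reachable)
        · have hspk : (spkV k : VV m) ∈ ((DubF j0 R : Set (VV m)))ᶜ := spk_not_mem j0 R hk
          exact ((ind_adj ha hspk ((adj_spk_rim k k (Or.inl rfl)).symm)).reachable).trans
            ((ind_adj hspk hhub ((adj_hub_spk k).symm)).reachable)
  intro a b
  exact (key a).trans (key b).symm

end UB


-- ### arithmetic instantiation


def fn (k : ℕ) : ℕ := 3*(k/2) + k%2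

def gfun (k : ℕ) : Fin (m+4) := ⟨fn k % (m+4), Nat.mod_lt _ (by omega)⟩

def RF (c : ℕ) : Finset (Fin (m+4)) := (Finset.range c).image (gfun (m := m))

lemma gfun_val {k : ℕ} (h : fn k < m+4) : (gfun (m := m) k).val = fn k := Nat.mod_eq_of_lt h

lemma mem_RF {c : ℕ} (hc : ∀ k, k < c → fn k < m+4) {i : Fin (m+4)} :
    i ∈ RF (m := m) c ↔ ∃ k, k < c ∧ fn k = i.val := by
  simp only [RF, Finset.mem_image, Finset.mem_range]
  constructor
  · rintro ⟨k, hk, rfl⟩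
    exact ⟨k, hk, (gfun_val (hc k hk)).symm⟩
  · rintro ⟨k, hk, hv⟩
    exact ⟨k, hk, Fin.ext (by rw [gfun_val (hc _ hk)]; exact hv)⟩

lemma card_RF {c : ℕ} (hc : ∀ k, k < c → fn k < m+4) : (RF (m := m) c).card = c := by
  rw [RF, Finset.card_image_of_injOn, Finset.card_range]
  intro a ha b hb hab
  simp only [Finset.coe_range, Set.mem_Iio] at ha hb
  have hv := congrArg Fin.val hab
  rw [gfun_val (hc _ ha), gfun_val (hc _ hb)] at hv
  simp only [fn] at hv
  omega

lemma val_add_one' (j : Fin (m+4)) :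
    ((j + 1).val = j.val + 1 ∧ j.val + 1 < m+4) ∨ (j.val = m+3 ∧ (j+1).val = 0) := by
  rcases Nat.lt_or_ge (j.val + 1) (m+4) with h | h
  · left
    refine ⟨?_, h⟩
    rw [Fin.add_def, Fin.val_one]
    exact Nat.mod_eq_of_lt h
  · right
    have hj := j.isLt
    have hval : j.val = m+3 := by omega
    refine ⟨hval, ?_⟩
    rw [Fin.add_def, Fin.val_one, hval]
    simp

lemma succ_eq_of_val {j i : Fin (m+4)}
    (h : j.val + 1 = i.val ∨ (j.val = m+3 ∧ i.val = 0)) : j + 1 = i := by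
  apply Fin.ext
  have hi := i.isLt
  rcases val_add_one' j with ⟨h1, h2⟩ | ⟨h1, h2⟩ <;> omega

lemma ub_exists : ∃ D : Set (VV m), IsTOCDomSet (MG m) D ∧ D.ncard = (2*(m+4)+4)/3 := by
  obtain ⟨t, r, hr, hM⟩ : ∃ t r, r < 3 ∧ m + 4 = 3*t + r :=
    ⟨(m+4)/3, (m+4)%3, Nat.mod_lt _ (by omega), (Nat.div_add_mod _ 3).symm⟩
  have ht : 1 ≤ t := by omega
  obtain ⟨c, j0v, hdef⟩ : ∃ c j0v, (r = 0 ∧ c = 2*t ∧ j0v = 0) ∨ (r ≠ 0 ∧ c = 2*t+1 ∧ j0v = 3*t) := by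
    by_cases h : r = 0
    · exact ⟨2*t, 0, Or.inl ⟨h, rfl, rfl⟩⟩
    · exact ⟨2*t+1, 3*t, Or.inr ⟨h, rfl, rfl⟩⟩
  have hj0lt : j0v < m+4 := by omega
  set j0 : Fin (m+4) := ⟨j0v, hj0lt⟩ with hj0
  have hfc : ∀ k, k < c → fn k < m+4 := by
    intro k hk
    simp only [fn]
    omega
  set R := RF (m := m) c with hR
  have hmem : ∀ i : Fin (m+4), i ∈ R ↔ ∃ k, k < c ∧ fn k = i.val := fun i => mem_RF hfc
  -- h1
  have h1 : ∀ k : Fin (m+4), k ∈ R ∨ (∃ j ∈ R, j + 1 = k) ∨ k = j0 := by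
    intro i
    have hv := i.isLt
    by_cases hj : i.val = j0v
    · exact Or.inr (Or.inr (Fin.ext hj))
    · by_cases hm2 : i.val % 3 = 2
      · refine Or.inr (Or.inl ⟨gfun (2*((i.val-1)/3)+1), ?_, ?_⟩)
        · rw [hmem]
          refine ⟨2*((i.val-1)/3)+1, by omega, ?_⟩
          rw [gfun_val (by simp only [fn]; omega)]
        · apply succ_eq_of_val
          left
          rw [gfun_val (by simp only [fn]; omega)]
          simp only [fn]
          omega
      · by_cases hcc : 2*(i.val/3) + i.val % 3 < c
        · refine Or.inl ?_
          rw [hmem]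
          exact ⟨2*(i.val/3) + i.val % 3, hcc, by simp only [fn]; omega⟩
        · refine Or.inr (Or.inl ⟨gfun (2*((i.val-1)/3) + (i.val-1) % 3), ?_, ?_⟩)
          · rw [hmem]
            refine ⟨2*((i.val-1)/3) + (i.val-1) % 3, by omega, ?_⟩
            rw [gfun_val (by simp only [fn]; omega)]
          · apply succ_eq_of_val
            left
            rw [gfun_val (by simp only [fn]; omega)]
            simp only [fn]
            omega
  -- h2
  have h2 : ∀ k : Fin (m+4), k + 1 ∈ R ∨ (∃ j ∈ R, j + 1 = k) ∨ k = j0 ∨ k + 1 = j0 := by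
    intro i
    have hv := i.isLt
    by_cases hj : i.val = j0v
    · exact Or.inr (Or.inr (Or.inl (Fin.ext hj)))
    · have h3m : i.val % 3 = 0 ∨ i.val % 3 = 1 ∨ i.val % 3 = 2 := by omega
      rcases h3m with hm0 | hm1 | hm2
      · -- i.val % 3 = 0, i ≠ j0 : i+1 ∈ R (no wraparound)
        refine Or.inl ?_
        rw [hmem]
        refine ⟨2*((i.val+1)/3)+1, by omega, ?_⟩
        rcases val_add_one' i with ⟨ha, hb⟩ | ⟨ha, hb⟩ <;> simp only [fn] <;> omega
      · -- i.val % 3 = 1 : j with j+1 = i, fn j = i.val - 1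
        refine Or.inr (Or.inl ⟨gfun (2*((i.val-1)/3)), ?_, ?_⟩)
        · rw [hmem]
          refine ⟨2*((i.val-1)/3), by omega, ?_⟩
          rw [gfun_val (by simp only [fn]; omega)]
        · apply succ_eq_of_val
          left
          rw [gfun_val (by simp only [fn]; omega)]
          simp only [fn]
          omega
      · -- i.val % 3 = 2 : i+1 ∈ R (maybe wraparound)
        refine Or.inl ?_
        rw [hmem]
        rcases val_add_one' i with ⟨ha, hb⟩ | ⟨ha, hb⟩
        · refine ⟨2*((i.val+1)/3), by omega, ?_⟩
          simp only [fn]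
          omega
        · refine ⟨0, by omega, ?_⟩
          simp only [fn]
          omega
  -- h3
  have h3 : j0 ∈ R ∨ ∃ j ∈ R, j + 1 = j0 := by
    refine Or.inl ?_
    rw [hmem]
    rcases hdef with ⟨hr0, hc0, hj00⟩ | ⟨hr0, hc0, hj00⟩
    · exact ⟨0, by omega, by show fn 0 = j0v; simp only [fn]; omega⟩
    · exact ⟨2*t, by omega, by show fn (2*t) = j0v; simp only [fn]; omega⟩
  -- h4
  have h4 : ∀ j ∈ R, j + 1 ≠ j0 := by
    intro j hj hcon
    rw [hmem] at hj
    obtain ⟨k, hk, hkv⟩ := hj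
    have hval := congrArg Fin.val hcon
    have hj0val : (j0 : Fin (m+4)).val = j0v := rfl
    rcases val_add_one' j with ⟨ha, hb⟩ | ⟨ha, hb⟩ <;> simp only [fn] at hkv <;> omega
  refine ⟨(DubF j0 R : Set (VV m)), ⟨ub_dom j0 R h1 h2 h3, ub_conn j0 R h4⟩, ?_⟩
  rw [Set.ncard_coe_finset, card_DubF, hR, card_RF hfc]
  omega

lemma toc_main : tocDomNum (MG m) = (2*(m+4)+4)/3 := by
  obtain ⟨D, hD, hcard⟩ := ub_exists (m := m)
  apply le_antisymm
  · exact Nat.sInf_le ⟨D, hD, hcard⟩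
  · refine le_csInf ⟨(2*(m+4)+4)/3, D, hD, hcard⟩ ?_
    rintro k ⟨D', hD', rfl⟩
    have := lower_bound (D := D') hD'.1
    omega

end Aux

theorem stmt3 (n : ℕ) (hn : 5 ≤ n) :
    tocDomNum (middleGraph (wheelGraph (n - 1))) = (2 * n + 2) / 3 := by
  obtain ⟨m, rfl⟩ : ∃ m, n = m + 5 := ⟨n - 5, by omega⟩
  show tocDomNum (Aux.MG m) = (2 * (m + 5) + 2) / 3
  rw [Aux.toc_main]
  omega
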